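/- Let F be a Bedford–McMullen carpet. Then the limit lim_{r→0⁺} log N_r(F)/(−log r) exists and equals log M/log m + log(N/M)/log n; that is, the box dimension of F is dim_B F = log M/log m + log(N/M)/log n. -/

import Mathlib

open Set Filter MeasureTheory
open scoped ENNReal NNReal

noncomputable section

/-- The affine contraction for digit `d = (a, b)` in the `m × n` grid:
`(x, y) ↦ ((x + a)/m, (y + b)/n)`. -/
def bmMap (m n : ℕ) (d : ℕ × ℕ) : ℝ × ℝ → ℝ × ℝ :=
  fun p => ((p.1 + d.1) / m, (p.2 + d.2) / n)

/-- `F` is the Bedford–McMullen carpet with grid `m × n` and digit set `D`. -/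
structure IsBMCarpet (m n : ℕ) (D : Finset (ℕ × ℕ)) (F : Set (ℝ × ℝ)) : Prop where
  one_lt_m : 1 < m
  m_lt_n : m < n
  D_nonempty : D.Nonempty
  D_sub : ∀ d ∈ D, d.1 < m ∧ d.2 < n
  F_nonempty : F.Nonempty
  F_compact : IsCompact F
  self_affine : F = ⋃ d ∈ D, bmMap m n d '' F

/-- The set of nonempty columns. -/
def cols (D : Finset (ℕ × ℕ)) : Finset ℕ := D.image Prod.fst

/-- The number of chosen rectangles in column `a`. -/
def colCount (D : Finset (ℕ × ℕ)) (a : ℕ) : ℕ := (D.filter fun d => d.1 = a).card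

/-- The carpet has uniform fibres: every nonempty column contains `N/M` rectangles. -/
def UniformFibres (D : Finset (ℕ × ℕ)) : Prop :=
  ∀ a ∈ cols D, (cols D).card * colCount D a = D.card

/-- Smallest number of sets of diameter at most `r` needed to cover `E`. -/
def coverNumber (E : Set (ℝ × ℝ)) (r : ℝ) : ℕ :=
  sInf {k : ℕ | ∃ U : Fin k → Set (ℝ × ℝ),
    (∀ i, EMetric.diam (U i) ≤ ENNReal.ofReal r) ∧ E ⊆ ⋃ i, U i}

/-- The upper box dimension, `limsup_{r → 0⁺} log N_r(E) / (-log r)`. -/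
def upperBoxDim (E : Set (ℝ × ℝ)) : ℝ :=
  limsup (fun r : ℝ => Real.log (coverNumber E r) / (-Real.log r)) (nhdsWithin 0 (Set.Ioi 0))

/-- The Assouad dimension. -/
def assouadDim (E : Set (ℝ × ℝ)) : ℝ :=
  sInf {s : ℝ | 0 ≤ s ∧ ∃ C > 0, ∀ x ∈ E, ∀ r R : ℝ, 0 < r → r < R →
    (coverNumber (Metric.ball x R ∩ E) r : ℝ) ≤ C * (R / r) ^ s}

/-- The lower dimension. -/
def lowerDim (E : Set (ℝ × ℝ)) : ℝ :=
  sSup {s : ℝ | 0 ≤ s ∧ ∃ C > 0, ∀ x ∈ E, ∀ r R : ℝ, 0 < r → r < R → R ≤ Metric.diam E →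
    C * (R / r) ^ s ≤ (coverNumber (Metric.ball x R ∩ E) r : ℝ)}

/-- The Assouad spectrum with parameter `θ ∈ (0,1)`. -/
def assouadSpectrum (θ : ℝ) (E : Set (ℝ × ℝ)) : ℝ :=
  sInf {s : ℝ | 0 ≤ s ∧ ∃ C > 0, ∀ x ∈ E, ∀ R : ℝ, 0 < R → R < 1 →
    (coverNumber (Metric.ball x R ∩ E) (R ^ (1 / θ)) : ℝ) ≤ C * (R / R ^ (1 / θ)) ^ s}

/-- The lower spectrum with parameter `θ ∈ (0,1)`. -/
def lowerSpectrum (θ : ℝ) (E : Set (ℝ × ℝ)) : ℝ :=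
  sSup {s : ℝ | 0 ≤ s ∧ ∃ C > 0, ∀ x ∈ E, ∀ R : ℝ, 0 < R → R < 1 →
    C * (R / R ^ (1 / θ)) ^ s ≤ (coverNumber (Metric.ball x R ∩ E) (R ^ (1 / θ)) : ℝ)}

/-- The θ-intermediate dimension: infimum of `s ≥ 0` such that for every `ε > 0` there is
`δ₀ > 0` so that for every `0 < δ ≤ δ₀` there is a countable cover `{U_i}` of `E` with
`δ^{1/θ} ≤ |U_i| ≤ δ` and `Σ_i |U_i|^s ≤ ε`. -/
def interDim (θ : ℝ) (E : Set (ℝ × ℝ)) : ℝ :=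
  sInf {s : ℝ | 0 ≤ s ∧ ∀ ε : ℝ, 0 < ε → ∃ δ₀ > 0, ∀ δ : ℝ, 0 < δ → δ ≤ δ₀ →
    ∃ (ι : Type) (_ : Countable ι) (U : ι → Set (ℝ × ℝ)),
      (E ⊆ ⋃ i, U i) ∧
      (∀ i, ENNReal.ofReal (δ ^ (1 / θ)) ≤ EMetric.diam (U i) ∧
        EMetric.diam (U i) ≤ ENNReal.ofReal δ) ∧
      (∑' i, EMetric.diam (U i) ^ s) ≤ ENNReal.ofReal ε}

/-- A measure is exact dimensional with dimension `α` if the local dimension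
`log ν(B(x,r)) / log r` tends to `α` as `r → 0⁺`, for `ν`-a.e. `x`. -/
def ExactDimensional (μ : Measure (ℝ × ℝ)) (α : ℝ) : Prop :=
  ∀ᵐ x ∂μ, Tendsto (fun r : ℝ => Real.log (μ (Metric.ball x r)).toReal / Real.log r)
    (nhdsWithin 0 (Set.Ioi 0)) (nhds α)

/-- The Hausdorff dimension of a measure: the infimum of `dimH A` over Borel sets of full
measure. -/
def measureDimH {X : Type*} [EMetricSpace X] [MeasurableSpace X] (ν : Measure X) : ℝ≥0∞ :=
  ⨅ (A : Set X) (_ : MeasurableSet A) (_ : ν A = 1), dimH A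

/-- The generalized Hausdorff measure associated to the gauge function `h`. -/
def gaugeMeasure (h : ℝ → ℝ) : Measure (ℝ × ℝ) :=
  MeasureTheory.Measure.mkMetric (fun r : ℝ≥0∞ => ENNReal.ofReal (h r.toReal))

namespace BM

/-- 1D contraction `x ↦ (x+a)/m`. -/
noncomputable def gmap (m a : ℕ) (x : ℝ) : ℝ := (x + a) / m

/-- Iterated 1D contraction along a digit word (first digit most significant). -/
noncomputable def gL (m : ℕ) : List ℕ → ℝ → ℝ
  | [] => id
  | a :: t => fun x => gmap m a (gL m t x)

@[simp] lemma gL_nil (m : ℕ) (x : ℝ) : gL m [] x = x := rfl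
@[simp] lemma gL_cons (m a : ℕ) (t : List ℕ) (x : ℝ) :
    gL m (a :: t) x = gmap m a (gL m t x) := rfl

/-- Integer value of a digit word in base `m`. -/
def valN (m : ℕ) : List ℕ → ℕ
  | [] => 0
  | a :: t => a * m ^ t.length + valN m t

lemma gL_eq (m : ℕ) (hm : 0 < m) (as : List ℕ) (x : ℝ) :
    gL m as x = (x + valN m as) / (m : ℝ) ^ as.length := by
  induction as with
  | nil => simp [gL, valN]
  | cons a t ih =>
      have hm' : (m : ℝ) ≠ 0 := by positivity
      simp only [gL, gmap, ih, valN, List.length_cons]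
      push_cast
      field_simp
      ring

lemma valN_lt (m : ℕ) (as : List ℕ) (h : ∀ a ∈ as, a < m) : valN m as < m ^ as.length := by
  induction as with
  | nil => simp [valN]
  | cons a t ih =>
      have ha : a < m := h a (by simp)
      have ht := ih (fun b hb => h b (by simp [hb]))
      have : a * m ^ t.length + valN m t < (a + 1) * m ^ t.length := by
        nlinarith
      calc valN m (a :: t) < (a + 1) * m ^ t.length := this
        _ ≤ m * m ^ t.length := by
            have : a + 1 ≤ m := ha
            exact Nat.mul_le_mul_right _ this
        _ = m ^ (a :: t).length := by simp [List.length_cons, pow_succ, Nat.mul_comm]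

lemma valN_inj (m : ℕ) : ∀ (as bs : List ℕ), as.length = bs.length →
    (∀ a ∈ as, a < m) → (∀ a ∈ bs, a < m) → valN m as = valN m bs → as = bs := by
  intro as
  induction as with
  | nil => intro bs hl _ _ _; cases bs with
      | nil => rfl
      | cons b t => simp at hl
  | cons a t ih =>
      intro bs hl ha hb hv
      cases bs with
      | nil => simp at hl
      | cons b s =>
          have hls : t.length = s.length := by simpa using hl
          have hval : a * m ^ t.length + valN m t = b * m ^ s.length + valN m s := hv
          rw [← hls] at hval
          have h1 : valN m t < m ^ t.length := valN_lt m t (fun x hx => ha x (by simp [hx]))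
          have h2 : valN m s < m ^ t.length := hls ▸ valN_lt m s (fun x hx => hb x (by simp [hx]))
          have hab : a = b := by
            by_contra hne
            rcases Nat.lt_or_ge a b with h | h
            · have : (a + 1) * m ^ t.length ≤ b * m ^ t.length :=
                Nat.mul_le_mul_right _ h
              nlinarith
            · have h' : b < a := lt_of_le_of_ne h (Ne.symm hne)
              have : (b + 1) * m ^ t.length ≤ a * m ^ t.length :=
                Nat.mul_le_mul_right _ h'
              nlinarith
          subst hab
          have : valN m t = valN m s := by omega
          have := ih s hls (fun x hx => ha x (by simp [hx])) (fun x hx => hb x (by simp [hx])) this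
          rw [this]

lemma gL_append (m : ℕ) (as bs : List ℕ) (x : ℝ) :
    gL m (as ++ bs) x = gL m as (gL m bs x) := by
  induction as with
  | nil => simp [gL]
  | cons a t ih => simp [gL, ih]

lemma gL_mem_Icc (m : ℕ) (hm : 0 < m) (as : List ℕ) {x : ℝ} (hx : x ∈ Icc (0:ℝ) 1) :
    gL m as x ∈ Icc ((valN m as : ℝ) / (m:ℝ) ^ as.length)
      (((valN m as : ℝ) + 1) / (m:ℝ) ^ as.length) := by
  rw [gL_eq m hm]
  have hp : (0:ℝ) < (m:ℝ) ^ as.length := by positivity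
  exact ⟨(div_le_div_iff_of_pos_right hp).mpr (by linarith [hx.1]),
    (div_le_div_iff_of_pos_right hp).mpr (by linarith [hx.2])⟩

lemma gL_mem01 (m : ℕ) (hm : 0 < m) (as : List ℕ) (ha : ∀ a ∈ as, a < m)
    {x : ℝ} (hx : x ∈ Icc (0:ℝ) 1) : gL m as x ∈ Icc (0:ℝ) 1 := by
  have h := gL_mem_Icc m hm as hx
  have hv : (valN m as : ℝ) + 1 ≤ (m:ℝ) ^ as.length := by
    have := valN_lt m as ha
    have : valN m as + 1 ≤ m ^ as.length := this
    exact_mod_cast this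
  have hp : (0:ℝ) < (m:ℝ) ^ as.length := by positivity
  constructor
  · exact le_trans (by positivity) h.1
  · exact le_trans h.2 (by rw [div_le_one hp]; exact hv)

/-- Iterated 2D contraction along a digit word. -/
noncomputable def mapL (m n : ℕ) : List (ℕ × ℕ) → ℝ × ℝ → ℝ × ℝ
  | [] => id
  | d :: t => fun p => bmMap m n d (mapL m n t p)

lemma mapL_eq (m n : ℕ) (ds : List (ℕ × ℕ)) (p : ℝ × ℝ) :
    mapL m n ds p = (gL m (ds.map Prod.fst) p.1, gL n (ds.map Prod.snd) p.2) := by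
  induction ds with
  | nil => rfl
  | cons d t ih => simp [mapL, ih, bmMap, gmap]

/-- Finset of words of length `l` over alphabet `S`. -/
def words {α : Type*} [DecidableEq α] (S : Finset α) : ℕ → Finset (List α)
  | 0 => {[]}
  | l + 1 => Finset.image₂ List.cons S (words S l)

lemma mem_words {α : Type*} [DecidableEq α] (S : Finset α) :
    ∀ (l : ℕ) (ds : List α), ds ∈ words S l ↔ ds.length = l ∧ ∀ d ∈ ds, d ∈ S := by
  intro l
  induction l with
  | zero => intro ds; simp [words]; rintro rfl; simp
  | succ l ih =>
      intro ds
      simp only [words, Finset.mem_image₂]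
      constructor
      · rintro ⟨a, ha, t, ht, rfl⟩
        rcases (ih t).mp ht with ⟨hl, hmem⟩
        exact ⟨by simp [hl], by intro d hd; rcases List.mem_cons.mp hd with rfl | h
                                exact ha
                                exact hmem d h⟩
      · rintro ⟨hl, hmem⟩
        cases ds with
        | nil => simp at hl
        | cons a t =>
            refine ⟨a, hmem a (by simp), t, (ih t).mpr ⟨by simpa using hl, ?_⟩, rfl⟩
            intro d hd; exact hmem d (by simp [hd])

lemma card_words {α : Type*} [DecidableEq α] (S : Finset α) (l : ℕ) :
    (words S l).card = S.card ^ l := by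
  induction l with
  | zero => simp [words]
  | succ l ih =>
      rw [words, Finset.card_image₂ (fun a b a' b' h => by
        injection h with h1 h2; exact ⟨h1, h2⟩), ih, pow_succ]
      ring

lemma subset_Icc01 {K : Set ℝ} (hne : K.Nonempty) (hba : BddAbove K) (hbb : BddBelow K)
    (c : ℕ) (hc : 1 < c) (h : ∀ x ∈ K, ∃ y ∈ K, ∃ a : ℕ, a < c ∧ x = (y + a) / c) :
    K ⊆ Icc (0:ℝ) 1 := by
  have hc' : (1:ℝ) < c := by exact_mod_cast hc
  have hc0 : (0:ℝ) < c := by linarith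
  set s := sSup K with hs
  set i := sInf K with hi
  have hsle : s ≤ 1 := by
    have h1 : s ≤ (s + ((c:ℝ) - 1)) / c := by
      apply csSup_le hne
      intro x hx
      obtain ⟨y, hy, a, ha, rfl⟩ := h x hx
      have hys : y ≤ s := le_csSup hba hy
      have h2 : (a:ℝ) ≤ (c:ℝ) - 1 := by
        have : (a:ℝ) + 1 ≤ c := by exact_mod_cast ha
        linarith
      gcongr
    rw [le_div_iff₀ hc0] at h1
    nlinarith
  have hige : 0 ≤ i := by
    have h1 : i ≤ i * c := by
      have h2 : i / c ≤ i := by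
        apply le_csInf hne
        intro x hx
        obtain ⟨y, hy, a, ha, rfl⟩ := h x hx
        have hiy : i ≤ y := csInf_le hbb hy
        have ha0 : (0:ℝ) ≤ a := Nat.cast_nonneg a
        gcongr
        linarith
      rwa [div_le_iff₀ hc0] at h2
    nlinarith
  intro x hx
  exact ⟨le_trans hige (csInf_le hbb hx), le_trans (le_csSup hba hx) hsle⟩

lemma diam_prod_Icc' {a a' b b' r : ℝ} (h1 : a' - a ≤ r) (h2 : b' - b ≤ r) (hr : 0 ≤ r) :
    EMetric.diam (Icc a a' ×ˢ Icc b b') ≤ ENNReal.ofReal r := by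
  apply EMetric.diam_le
  rintro p ⟨hp1, hp2⟩ q ⟨hq1, hq2⟩
  rw [edist_le_ofReal hr, Prod.dist_eq]
  apply max_le
  · exact (Real.dist_le_of_mem_Icc hp1 hq1).trans h1
  · exact (Real.dist_le_of_mem_Icc hp2 hq2).trans h2

/-- Approximate square indexed by a level-`l` word and an extra column word. -/
def rect (m n k l : ℕ) (i : List (ℕ × ℕ) × List ℕ) : Set (ℝ × ℝ) :=
  Icc ((valN m (i.1.map Prod.fst ++ i.2) : ℝ) / (m:ℝ)^k)
      (((valN m (i.1.map Prod.fst ++ i.2) : ℝ) + 1) / (m:ℝ)^k) ×ˢ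
  Icc ((valN n (i.1.map Prod.snd) : ℝ) / (n:ℝ)^l)
      (((valN n (i.1.map Prod.snd) : ℝ) + 1) / (n:ℝ)^l)

def coverSet (E : Set (ℝ × ℝ)) (r : ℝ) : Set ℕ :=
  {k : ℕ | ∃ U : Fin k → Set (ℝ × ℝ),
    (∀ i, EMetric.diam (U i) ≤ ENNReal.ofReal r) ∧ E ⊆ ⋃ i, U i}

lemma coverNumber_eq (E : Set (ℝ × ℝ)) (r : ℝ) : coverNumber E r = sInf (coverSet E r) := rfl

lemma coverSet_mono {E : Set (ℝ × ℝ)} {r r' : ℝ} (h : r ≤ r') :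
    coverSet E r ⊆ coverSet E r' := by
  rintro k ⟨U, hU, hc⟩
  exact ⟨U, fun i => (hU i).trans (ENNReal.ofReal_le_ofReal h), hc⟩

lemma coverNumber_anti {E : Set (ℝ × ℝ)} {r r' : ℝ} (h : r ≤ r')
    (hne : (coverSet E r).Nonempty) : coverNumber E r' ≤ coverNumber E r := by
  rw [coverNumber_eq, coverNumber_eq]
  exact Nat.sInf_le (coverSet_mono h (Nat.sInf_mem hne))

lemma coverNumber_le_card {ι : Type*} (E : Set (ℝ × ℝ)) (r : ℝ) (S : Finset ι)
    (V : ι → Set (ℝ × ℝ)) (hd : ∀ i ∈ S, EMetric.diam (V i) ≤ ENNReal.ofReal r)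
    (hc : E ⊆ ⋃ i ∈ S, V i) : coverNumber E r ≤ S.card := by
  apply Nat.sInf_le
  refine ⟨fun j => V ((S.equivFin.symm j) : {x // x ∈ S}), fun j => hd _ (S.equivFin.symm j).2, ?_⟩
  intro x hx
  have hx' := hc hx
  simp only [Set.mem_iUnion] at hx' ⊢
  obtain ⟨i, hi, hxi⟩ := hx'
  exact ⟨S.equivFin ⟨i, hi⟩, by simpa using hxi⟩

lemma card_mem_coverSet {ι : Type*} (E : Set (ℝ × ℝ)) (r : ℝ) (S : Finset ι)
    (V : ι → Set (ℝ × ℝ)) (hd : ∀ i ∈ S, EMetric.diam (V i) ≤ ENNReal.ofReal r)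
    (hc : E ⊆ ⋃ i ∈ S, V i) : S.card ∈ coverSet E r := by
  refine ⟨fun j => V ((S.equivFin.symm j) : {x // x ∈ S}), fun j => hd _ (S.equivFin.symm j).2, ?_⟩
  intro x hx
  have hx' := hc hx
  simp only [Set.mem_iUnion] at hx' ⊢
  obtain ⟨i, hi, hxi⟩ := hx'
  exact ⟨S.equivFin ⟨i, hi⟩, by simpa using hxi⟩

lemma one_le_coverNumber {E : Set (ℝ × ℝ)} {r : ℝ} (hE : E.Nonempty)
    (hne : (coverSet E r).Nonempty) : 1 ≤ coverNumber E r := by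
  rw [coverNumber_eq]
  rcases Nat.eq_zero_or_pos (sInf (coverSet E r)) with h0 | h1
  · exfalso
    have h := Nat.sInf_mem hne
    rw [h0] at h
    obtain ⟨U, _, hc⟩ := h
    obtain ⟨x, hx⟩ := hE
    have h2 := hc hx
    simp only [Set.mem_iUnion] at h2
    obtain ⟨i, _⟩ := h2
    exact i.elim0
  · exact h1

lemma diam_prod_Icc {a b c d : ℝ} (hab : a ≤ b) (hcd : c ≤ d) :
    EMetric.diam (Icc a b ×ˢ Icc c d) ≤ ENNReal.ofReal (max (b - a) (d - c)) := by
  apply EMetric.diam_le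
  rintro p ⟨hp1, hp2⟩ q ⟨hq1, hq2⟩
  rw [edist_le_ofReal (by simp [le_max_iff]; left; linarith)]
  rw [Prod.dist_eq]
  apply max_le_max
  · exact Real.dist_le_of_mem_Icc hp1 hq1
  · exact Real.dist_le_of_mem_Icc hp2 hq2


lemma card_le_coverNumber_mul {ι : Type*} [DecidableEq ι] {E : Set (ℝ × ℝ)} {r : ℝ}
    (hr : 0 ≤ r) (hne : (coverSet E r).Nonempty)
    (S : Finset ι) (Q : ι → ℝ × ℝ) (c : ι → ℕ × ℕ) (wx wy : ℕ)
    (hQ : ∀ i ∈ S, Q i ∈ E) (hinj : Set.InjOn c S)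
    (hwin : ∀ i ∈ S, ∀ j ∈ S, dist (Q i) (Q j) ≤ r →
      (c i).1 ≤ (c j).1 + wx ∧ (c i).2 ≤ (c j).2 + wy) :
    S.card ≤ coverNumber E r * ((2 * wx + 1) * (2 * wy + 1)) := by
  set K := coverNumber E r with hK
  obtain ⟨U, hU, hc⟩ : K ∈ coverSet E r := Nat.sInf_mem hne
  classical
  have hsub : S ⊆ Finset.univ.biUnion (fun j : Fin K => S.filter (fun i => Q i ∈ U j)) := by
    intro i hi
    have h1 := hc (hQ i hi)
    simp only [Set.mem_iUnion] at h1
    obtain ⟨j, hj⟩ := h1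
    exact Finset.mem_biUnion.mpr ⟨j, Finset.mem_univ j, Finset.mem_filter.mpr ⟨hi, hj⟩⟩
  calc S.card ≤ (Finset.univ.biUnion (fun j : Fin K => S.filter (fun i => Q i ∈ U j))).card :=
        Finset.card_le_card hsub
    _ ≤ ∑ j : Fin K, (S.filter (fun i => Q i ∈ U j)).card := Finset.card_biUnion_le
    _ ≤ ∑ _j : Fin K, ((2 * wx + 1) * (2 * wy + 1)) := by
        apply Finset.sum_le_sum
        intro j _
        set T := S.filter (fun i => Q i ∈ U j) with hT
        rcases T.eq_empty_or_nonempty with h | ⟨i₀, hi₀⟩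
        · simp [h]
        · have hi₀S : i₀ ∈ S := (Finset.mem_filter.mp hi₀).1
          have hkey : ∀ i ∈ T, c i ∈
              Finset.Icc ((c i₀).1 - wx) ((c i₀).1 + wx) ×ˢ
              Finset.Icc ((c i₀).2 - wy) ((c i₀).2 + wy) := by
            intro i hi
            have hiS : i ∈ S := (Finset.mem_filter.mp hi).1
            have hdist : dist (Q i) (Q i₀) ≤ r := by
              have h1 : edist (Q i) (Q i₀) ≤ EMetric.diam (U j) :=
                EMetric.edist_le_diam_of_mem (Finset.mem_filter.mp hi).2
                  (Finset.mem_filter.mp hi₀).2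
              exact (edist_le_ofReal hr).mp (h1.trans (hU j))
            have hdist' : dist (Q i₀) (Q i) ≤ r := by rwa [dist_comm]
            have h1 := hwin i hiS i₀ hi₀S hdist
            have h2 := hwin i₀ hi₀S i hiS hdist'
            simp only [Finset.mem_product, Finset.mem_Icc]
            omega
          have hTS : Set.InjOn c T :=
            hinj.mono (Finset.coe_subset.mpr (Finset.filter_subset _ _))
          calc T.card ≤ _ := Finset.card_le_card_of_injOn c hkey hTS
            _ ≤ (2 * wx + 1) * (2 * wy + 1) := by
                rw [Finset.card_product]
                apply Nat.mul_le_mul <;> (rw [Nat.card_Icc]; omega)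
    _ = K * ((2 * wx + 1) * (2 * wy + 1)) := by
        simp [Finset.sum_const, Finset.card_univ]

/-- Least `k` with `n^l ≤ m^k`. -/
def kfun (m n l : ℕ) : ℕ := sInf {k | n ^ l ≤ m ^ k}

lemma kfun_nonempty {m : ℕ} (hm : 1 < m) (n l : ℕ) : {k | n ^ l ≤ m ^ k}.Nonempty := by
  refine ⟨n ^ l, ?_⟩
  calc n ^ l ≤ 2 ^ (n ^ l) := (Nat.lt_two_pow_self).le
    _ ≤ m ^ (n ^ l) := Nat.pow_le_pow_left hm _

lemma kfun_spec {m : ℕ} (hm : 1 < m) (n l : ℕ) : n ^ l ≤ m ^ (kfun m n l) :=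
  Nat.sInf_mem (kfun_nonempty hm n l)

lemma kfun_min {m : ℕ} (hm : 1 < m) (n l : ℕ) {j : ℕ} (hj : j < kfun m n l) :
    m ^ j < n ^ l := by
  have := Nat.notMem_of_lt_sInf hj
  simpa [Set.mem_setOf_eq, not_le] using this

lemma le_kfun {m n : ℕ} (hm : 1 < m) (hmn : m ≤ n) (l : ℕ) : l ≤ kfun m n l := by
  by_contra h
  push_neg at h
  have h1 : m ^ (kfun m n l) < m ^ l := Nat.pow_lt_pow_right hm h
  have h2 : m ^ l ≤ n ^ l := Nat.pow_le_pow_left hmn l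
  have := kfun_spec hm n l
  omega

lemma kfun_lt {m n : ℕ} (hm : 1 < m) (n0 : 0 < n) (l : ℕ) :
    m ^ (kfun m n l) < m * n ^ l := by
  rcases Nat.eq_zero_or_pos (kfun m n l) with h0 | h1
  · rw [h0]
    have : 0 < n ^ l := Nat.pow_pos n0
    nlinarith
  · obtain ⟨j, hj⟩ : ∃ j, kfun m n l = j + 1 := ⟨kfun m n l - 1, by omega⟩
    have := kfun_min hm n l (j := j) (by omega)
    rw [hj, pow_succ]
    calc m ^ j * m = m * m ^ j := Nat.mul_comm _ _
      _ < m * n ^ l := by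
          exact Nat.mul_lt_mul_of_le_of_lt (Nat.le_refl m) this (by omega)

lemma map_fst_snd_eq : ∀ (w w' : List (ℕ × ℕ)), w.map Prod.fst = w'.map Prod.fst →
    w.map Prod.snd = w'.map Prod.snd → w = w' := by
  intro w
  induction w with
  | nil => intro w' h1 _; cases w' with
      | nil => rfl
      | cons a t => simp at h1
  | cons a t ih =>
      intro w' h1 h2
      cases w' with
      | nil => simp at h1
      | cons b s =>
          simp only [List.map_cons, List.cons.injEq] at h1 h2
          have : a = b := Prod.ext h1.1 h2.1
          rw [this, ih s h1.2 h2.2]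


noncomputable def liftCol (D : Finset (ℕ × ℕ)) (a : ℕ) : ℕ × ℕ :=
  if h : ∃ d ∈ D, d.1 = a then h.choose else (0, 0)

lemma liftCol_spec {D : Finset (ℕ × ℕ)} {a : ℕ} (ha : a ∈ cols D) :
    liftCol D a ∈ D ∧ (liftCol D a).1 = a := by
  obtain ⟨d, hd, hda⟩ := Finset.mem_image.mp ha
  have h : ∃ d ∈ D, d.1 = a := ⟨d, hd, hda⟩
  rw [liftCol, dif_pos h]
  exact h.choose_spec

section Carpet

variable {m n : ℕ} {D : Finset (ℕ × ℕ)} {F : Set (ℝ × ℝ)} (hF : IsBMCarpet m n D F)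

include hF

lemma hm1 : (1:ℝ) < m := by exact_mod_cast hF.one_lt_m
lemma hn1 : (1:ℝ) < n := by exact_mod_cast lt_trans hF.one_lt_m hF.m_lt_n

lemma F_sub_sq : F ⊆ Icc (0:ℝ) 1 ×ˢ Icc (0:ℝ) 1 := by
  have hmn : 1 < n := lt_trans hF.one_lt_m hF.m_lt_n
  have h1 : Prod.fst '' F ⊆ Icc (0:ℝ) 1 := by
    apply subset_Icc01 (hF.F_nonempty.image _)
      (hF.F_compact.image continuous_fst).bddAbove (hF.F_compact.image continuous_fst).bddBelow
      m hF.one_lt_m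
    rintro x ⟨p, hp, rfl⟩
    have := hF.self_affine ▸ hp
    simp only [Set.mem_iUnion] at this
    obtain ⟨d, hd, q, hq, rfl⟩ := this
    exact ⟨q.1, ⟨q, hq, rfl⟩, d.1, (hF.D_sub d hd).1, rfl⟩
  have h2 : Prod.snd '' F ⊆ Icc (0:ℝ) 1 := by
    apply subset_Icc01 (hF.F_nonempty.image _)
      (hF.F_compact.image continuous_snd).bddAbove (hF.F_compact.image continuous_snd).bddBelow
      n hmn
    rintro x ⟨p, hp, rfl⟩
    have := hF.self_affine ▸ hp
    simp only [Set.mem_iUnion] at this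
    obtain ⟨d, hd, q, hq, rfl⟩ := this
    exact ⟨q.2, ⟨q, hq, rfl⟩, d.2, (hF.D_sub d hd).2, rfl⟩
  intro p hp
  exact ⟨h1 ⟨p, hp, rfl⟩, h2 ⟨p, hp, rfl⟩⟩

lemma mapL_image_subset : ∀ (ds : List (ℕ × ℕ)), (∀ d ∈ ds, d ∈ D) →
    mapL m n ds '' F ⊆ F := by
  intro ds
  induction ds with
  | nil => intro _; simp [mapL]
  | cons d t ih =>
      intro hmem
      have h1 : mapL m n (d :: t) '' F = bmMap m n d '' (mapL m n t '' F) := by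
        rw [← Set.image_comp]; rfl
      rw [h1]
      have h2 : bmMap m n d '' F ⊆ F := by
        conv_rhs => rw [hF.self_affine]
        exact Set.subset_biUnion_of_mem (u := fun d => bmMap m n d '' F) (hmem d (by simp))
      calc bmMap m n d '' (mapL m n t '' F) ⊆ bmMap m n d '' F :=
            Set.image_mono (ih (fun x hx => hmem x (by simp [hx])))
        _ ⊆ F := h2

lemma F_subset_words (l : ℕ) : F ⊆ ⋃ ds ∈ words D l, mapL m n ds '' F := by
  induction l with
  | zero =>
      intro p hp
      simp only [Set.mem_iUnion]
      exact ⟨[], by simp [words], p, hp, rfl⟩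
  | succ l ih =>
      intro p hp
      have hp' := hF.self_affine ▸ hp
      simp only [Set.mem_iUnion] at hp'
      obtain ⟨d, hd, q, hq, rfl⟩ := hp'
      have hq' := ih hq
      simp only [Set.mem_iUnion] at hq'
      obtain ⟨ds, hds, z, hz, rfl⟩ := hq'
      simp only [Set.mem_iUnion]
      refine ⟨d :: ds, ?_, z, hz, rfl⟩
      rcases (mem_words D l ds).mp hds with ⟨hlen, hmem⟩
      exact (mem_words D (l+1) (d :: ds)).mpr ⟨by simp [hlen], by
        intro e he; rcases List.mem_cons.mp he with rfl | h
        exacts [hd, hmem e h]⟩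

lemma proj_subset_words (j : ℕ) :
    Prod.fst '' F ⊆ ⋃ as ∈ words (cols D) j, gL m as '' (Prod.fst '' F) := by
  induction j with
  | zero =>
      intro x hx
      simp only [Set.mem_iUnion]
      exact ⟨[], by simp [words], x, hx, rfl⟩
  | succ j ih =>
      rintro x ⟨p, hp, rfl⟩
      have hp' := hF.self_affine ▸ hp
      simp only [Set.mem_iUnion] at hp'
      obtain ⟨d, hd, q, hq, rfl⟩ := hp'
      have hq1 : q.1 ∈ Prod.fst '' F := ⟨q, hq, rfl⟩
      have hq' := ih hq1
      simp only [Set.mem_iUnion] at hq'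
      obtain ⟨as, has, z, hz, hgz⟩ := hq'
      simp only [Set.mem_iUnion]
      refine ⟨d.1 :: as, ?_, z, hz, by simp [gL, hgz]; rfl⟩
      rcases (mem_words (cols D) j as).mp has with ⟨hlen, hmem⟩
      refine (mem_words (cols D) (j+1) (d.1 :: as)).mpr ⟨by simp [hlen], ?_⟩
      intro e he; rcases List.mem_cons.mp he with rfl | h
      · exact Finset.mem_image.mpr ⟨d, hd, rfl⟩
      · exact hmem e h

lemma rect_diam (l : ℕ) (i : List (ℕ × ℕ) × List ℕ) :
    EMetric.diam (rect m n (kfun m n l) l i) ≤ ENNReal.ofReal ((n:ℝ)^l)⁻¹ := by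
  have hm := hF.one_lt_m
  have hn : 1 < n := lt_trans hm hF.m_lt_n
  have hnl : (0:ℝ) < (n:ℝ)^l := by positivity
  have hml : (0:ℝ) < (m:ℝ)^(kfun m n l) := by positivity
  have hle : (n:ℝ)^l ≤ (m:ℝ)^(kfun m n l) := by
    exact_mod_cast kfun_spec hm n l
  apply diam_prod_Icc'
  · have : ((valN m (i.1.map Prod.fst ++ i.2) : ℝ) + 1) / (m:ℝ)^(kfun m n l)
        - (valN m (i.1.map Prod.fst ++ i.2) : ℝ) / (m:ℝ)^(kfun m n l)
        = ((m:ℝ)^(kfun m n l))⁻¹ := by field_simp; ring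
    rw [this]
    exact (inv_le_inv₀ hml hnl).mpr hle
  · have : ((valN n (i.1.map Prod.snd) : ℝ) + 1) / (n:ℝ)^l
        - (valN n (i.1.map Prod.snd) : ℝ) / (n:ℝ)^l = ((n:ℝ)^l)⁻¹ := by field_simp; ring
    rw [this]
  · positivity

lemma F_sub_rects (l : ℕ) :
    F ⊆ ⋃ i ∈ (words D l) ×ˢ (words (cols D) (kfun m n l - l)),
      rect m n (kfun m n l) l i := by
  classical
  set k := kfun m n l with hk
  set j := k - l with hj
  have hm := hF.one_lt_m
  have hn : 1 < n := lt_trans hm hF.m_lt_n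
  have hlk : l ≤ k := le_kfun hm (le_of_lt hF.m_lt_n) l
  intro p hp
  have h1 := F_subset_words hF l hp
  simp only [Set.mem_iUnion] at h1
  obtain ⟨w, hw, q, hq, rfl⟩ := h1
  have hq1 : q.1 ∈ Prod.fst '' F := ⟨q, hq, rfl⟩
  have h2 := proj_subset_words hF j hq1
  simp only [Set.mem_iUnion] at h2
  obtain ⟨v, hv, z, hz, hgz⟩ := h2
  have hz01 : z ∈ Icc (0:ℝ) 1 := by
    obtain ⟨p', hp', rfl⟩ := hz
    exact ((F_sub_sq hF) hp').1
  have hq2 : q.2 ∈ Icc (0:ℝ) 1 := ((F_sub_sq hF) hq).2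
  simp only [Set.mem_iUnion]
  refine ⟨(w, v), Finset.mem_product.mpr ⟨hw, hv⟩, ?_⟩
  rw [mapL_eq]
  have hlenw : w.length = l := ((mem_words D l w).mp hw).1
  have hlenv : v.length = j := ((mem_words (cols D) j v).mp hv).1
  constructor
  · -- first coordinate
    have hx : gL m (w.map Prod.fst) q.1 = gL m (w.map Prod.fst ++ v) z := by
      rw [gL_append, hgz]
    have hmem := gL_mem_Icc m (by omega) (w.map Prod.fst ++ v) hz01
    have hlen : (w.map Prod.fst ++ v).length = k := by
      simp [List.length_append, List.length_map, hlenw, hlenv]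
      omega
    rw [hlen] at hmem
    show gL m (w.map Prod.fst) q.1 ∈ Icc _ _
    rw [hx]
    exact hmem
  · have hmem := gL_mem_Icc n (by omega) (w.map Prod.snd) hq2
    have hlen : (w.map Prod.snd).length = l := by simp [List.length_map, hlenw]
    rw [hlen] at hmem
    exact hmem

lemma cover_mem (l : ℕ) :
    D.card ^ l * (cols D).card ^ (kfun m n l - l) ∈ coverSet F ((n:ℝ)^l)⁻¹ := by
  classical
  have hcard : ((words D l) ×ˢ (words (cols D) (kfun m n l - l))).card
      = D.card ^ l * (cols D).card ^ (kfun m n l - l) := by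
    rw [Finset.card_product, card_words, card_words]
  rw [← hcard]
  exact card_mem_coverSet F _ _ _ (fun i _ => rect_diam hF l i) (F_sub_rects hF l)

lemma coverNumber_le_P (l : ℕ) :
    coverNumber F ((n:ℝ)^l)⁻¹ ≤ D.card ^ l * (cols D).card ^ (kfun m n l - l) :=
  Nat.sInf_le (cover_mem hF l)

lemma P_le_coverNumber (l : ℕ) :
    D.card ^ l * (cols D).card ^ (kfun m n l - l)
      ≤ coverNumber F ((n:ℝ)^l)⁻¹ * ((2 * m + 1) * (2 * 2 + 1)) := by
  classical
  set k := kfun m n l with hkdef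
  set j := k - l with hjdef
  obtain ⟨p₀, hp₀⟩ := hF.F_nonempty
  have hp₀1 : p₀.1 ∈ Icc (0:ℝ) 1 := (F_sub_sq hF hp₀).1
  have hp₀2 : p₀.2 ∈ Icc (0:ℝ) 1 := (F_sub_sq hF hp₀).2
  have hm := hF.one_lt_m
  have hn : 1 < n := lt_trans hm hF.m_lt_n
  have hlk : l ≤ k := le_kfun hm (le_of_lt hF.m_lt_n) l
  have hnl : (0:ℝ) < (n:ℝ)^l := by positivity
  have hmk : (0:ℝ) < (m:ℝ)^k := by positivity
  have hr0 : (0:ℝ) ≤ ((n:ℝ)^l)⁻¹ := by positivity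
  set S := (words D l) ×ˢ (words (cols D) j) with hS
  set Q : List (ℕ × ℕ) × List ℕ → ℝ × ℝ :=
    fun i => mapL m n (i.1 ++ i.2.map (liftCol D)) p₀ with hQdef
  set cfun : List (ℕ × ℕ) × List ℕ → ℕ × ℕ :=
    fun i => (valN m (i.1.map Prod.fst ++ i.2), valN n (i.1.map Prod.snd)) with hcdef
  -- membership facts
  have hmemS : ∀ i ∈ S, i.1 ∈ words D l ∧ i.2 ∈ words (cols D) j := by
    rintro ⟨w, v⟩ hi
    exact Finset.mem_product.mp hi
  have hwordD : ∀ i ∈ S, ∀ d ∈ i.1 ++ i.2.map (liftCol D), d ∈ D := by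
    rintro ⟨w, v⟩ hi d hd
    obtain ⟨hw, hv⟩ := hmemS _ hi
    rcases List.mem_append.mp hd with h | h
    · exact ((mem_words D l w).mp hw).2 d h
    · obtain ⟨a, ha, rfl⟩ := List.mem_map.mp h
      exact (liftCol_spec (((mem_words (cols D) j v).mp hv).2 a ha)).1
  have hQF : ∀ i ∈ S, Q i ∈ F := by
    intro i hi
    exact mapL_image_subset hF _ (hwordD i hi) ⟨p₀, hp₀, rfl⟩
  -- coordinates of Q
  have hmapfst : ∀ i ∈ S, (i.1 ++ i.2.map (liftCol D)).map Prod.fst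
      = i.1.map Prod.fst ++ i.2 := by
    rintro ⟨w, v⟩ hi
    obtain ⟨hw, hv⟩ := hmemS _ hi
    have : (v.map (liftCol D)).map Prod.fst = v := by
      rw [List.map_map]
      apply List.map_congr_left ?_ |>.trans (List.map_id v)
      intro a ha
      exact (liftCol_spec (((mem_words (cols D) j v).mp hv).2 a ha)).2
    simp [List.map_append, this]
  have hQ1 : ∀ i ∈ S, (Q i).1 ∈ Icc ((cfun i).1 / (m:ℝ)^k) (((cfun i).1 + 1) / (m:ℝ)^k) := by
    intro i hi
    obtain ⟨hw, hv⟩ := hmemS _ hi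
    have h1 : (Q i).1 = gL m (i.1.map Prod.fst ++ i.2) p₀.1 := by
      simp only [hQdef]
      rw [mapL_eq, hmapfst i hi]
    rw [h1]
    have hmem := gL_mem_Icc m (by omega) (i.1.map Prod.fst ++ i.2) hp₀1
    have hlen : (i.1.map Prod.fst ++ i.2).length = k := by
      simp [List.length_append, List.length_map,
        ((mem_words D l i.1).mp hw).1, ((mem_words (cols D) j i.2).mp hv).1]
      omega
    rw [hlen] at hmem
    exact hmem
  have hQ2 : ∀ i ∈ S, (Q i).2 ∈ Icc ((cfun i).2 / (n:ℝ)^l) (((cfun i).2 + 1) / (n:ℝ)^l) := by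
    intro i hi
    obtain ⟨hw, hv⟩ := hmemS _ hi
    have h1 : (Q i).2 = gL n (i.1.map Prod.snd) (gL n ((i.2.map (liftCol D)).map Prod.snd) p₀.2) := by
      simp only [hQdef]
      rw [mapL_eq]
      simp only [List.map_append, gL_append]
    rw [h1]
    have hin : gL n ((i.2.map (liftCol D)).map Prod.snd) p₀.2 ∈ Icc (0:ℝ) 1 := by
      apply gL_mem01 n (by omega) _ ?_ hp₀2
      intro b hb
      simp only [List.map_map, List.mem_map] at hb
      obtain ⟨a, ha, rfl⟩ := hb
      exact (hF.D_sub _ (liftCol_spec (((mem_words (cols D) j i.2).mp hv).2 a ha)).1).2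
    have hmem := gL_mem_Icc n (by omega) (i.1.map Prod.snd) hin
    have hlen : (i.1.map Prod.snd).length = l := by
      simp [List.length_map, ((mem_words D l i.1).mp hw).1]
    rw [hlen] at hmem
    exact hmem
  -- injectivity of cfun on S
  have hinj : Set.InjOn cfun S := by
    rintro ⟨w, v⟩ hi ⟨w', v'⟩ hi' heq
    simp only [Finset.coe_mem, Finset.mem_coe] at hi hi'
    obtain ⟨hw, hv⟩ := hmemS _ hi
    obtain ⟨hw', hv'⟩ := hmemS _ hi'
    obtain ⟨hwl, hwD⟩ := (mem_words D l w).mp hw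
    obtain ⟨hw'l, hw'D⟩ := (mem_words D l w').mp hw'
    obtain ⟨hvl, hvA⟩ := (mem_words (cols D) j v).mp hv
    obtain ⟨hv'l, hv'A⟩ := (mem_words (cols D) j v').mp hv'
    have hcx := congrArg Prod.fst heq
    have hcy := congrArg Prod.snd heq
    simp only [hcdef] at hcx hcy
    have hdfst : ∀ (w₀ : List (ℕ × ℕ)), (∀ d ∈ w₀, d ∈ D) → ∀ x ∈ w₀.map Prod.fst, x < m := by
      intro w₀ hw₀ x hx
      obtain ⟨d, hd, rfl⟩ := List.mem_map.mp hx
      exact (hF.D_sub d (hw₀ d hd)).1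
    have hdsnd : ∀ (w₀ : List (ℕ × ℕ)), (∀ d ∈ w₀, d ∈ D) → ∀ x ∈ w₀.map Prod.snd, x < n := by
      intro w₀ hw₀ x hx
      obtain ⟨d, hd, rfl⟩ := List.mem_map.mp hx
      exact (hF.D_sub d (hw₀ d hd)).2
    have hcolm : ∀ (v₀ : List ℕ), (∀ a ∈ v₀, a ∈ cols D) → ∀ x ∈ v₀, x < m := by
      intro v₀ hv₀ x hx
      obtain ⟨d, hd, rfl⟩ := Finset.mem_image.mp (hv₀ x hx)
      exact (hF.D_sub d hd).1
    have h1 : w.map Prod.fst ++ v = w'.map Prod.fst ++ v' := by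
      apply valN_inj m _ _ ?_ ?_ ?_ hcx
      · simp [List.length_append, List.length_map, hwl, hw'l, hvl, hv'l]
      · intro a ha
        rcases List.mem_append.mp ha with h | h
        exacts [hdfst w hwD a h, hcolm v hvA a h]
      · intro a ha
        rcases List.mem_append.mp ha with h | h
        exacts [hdfst w' hw'D a h, hcolm v' hv'A a h]
    have h2 : w.map Prod.snd = w'.map Prod.snd := by
      apply valN_inj n _ _ ?_ ?_ ?_ hcy
      · simp [List.length_map, hwl, hw'l]
      · exact hdsnd w hwD
      · exact hdsnd w' hw'D
    obtain ⟨h3, h4⟩ := List.append_inj h1 (by simp [List.length_map, hwl, hw'l])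
    have h5 : w = w' := map_fst_snd_eq w w' h3 h2
    rw [h5, h4]
  -- window condition
  have hwin : ∀ i ∈ S, ∀ i' ∈ S, dist (Q i) (Q i') ≤ ((n:ℝ)^l)⁻¹ →
      (cfun i).1 ≤ (cfun i').1 + m ∧ (cfun i).2 ≤ (cfun i').2 + 2 := by
    intro i hi i' hi' hdist
    have hd1 : dist (Q i).1 (Q i').1 ≤ ((n:ℝ)^l)⁻¹ := by
      rw [Prod.dist_eq] at hdist
      exact le_trans (le_max_left _ _) hdist
    have hd2 : dist (Q i).2 (Q i').2 ≤ ((n:ℝ)^l)⁻¹ := by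
      rw [Prod.dist_eq] at hdist
      exact le_trans (le_max_right _ _) hdist
    have hx := hQ1 i hi
    have hx' := hQ1 i' hi'
    have hy := hQ2 i hi
    have hy' := hQ2 i' hi'
    have habs1 : |(Q i).1 - (Q i').1| ≤ ((n:ℝ)^l)⁻¹ := by rwa [Real.dist_eq] at hd1
    have habs2 : |(Q i).2 - (Q i').2| ≤ ((n:ℝ)^l)⁻¹ := by rwa [Real.dist_eq] at hd2
    rw [abs_le] at habs1 habs2
    constructor
    · -- x window
      have hrm : ((n:ℝ)^l)⁻¹ < (m:ℝ) / (m:ℝ)^k := by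
        rw [inv_eq_one_div, div_lt_div_iff₀ hnl hmk]
        have : ((m:ℕ):ℝ)^k < (m:ℝ) * (n:ℝ)^l := by exact_mod_cast kfun_lt hm (by omega) l
        linarith
      have hkey : ((cfun i).1 : ℝ) / (m:ℝ)^k < (((cfun i').1 : ℝ) + 1 + m) / (m:ℝ)^k := by
        have e1 : ((cfun i).1 : ℝ) / (m:ℝ)^k ≤ (Q i).1 := hx.1
        have e2 : (Q i').1 ≤ (((cfun i').1 : ℝ) + 1) / (m:ℝ)^k := hx'.2
        have e3 : (Q i).1 ≤ (Q i').1 + ((n:ℝ)^l)⁻¹ := by linarith [habs1.2]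
        have e4 : (m:ℝ)/(m:ℝ)^k + (((cfun i').1 : ℝ) + 1) / (m:ℝ)^k
            = (((cfun i').1 : ℝ) + 1 + m) / (m:ℝ)^k := by ring
        linarith
      rw [div_lt_div_iff_of_pos_right hmk] at hkey
      have : ((cfun i).1 : ℝ) < ((cfun i').1 : ℝ) + 1 + (m:ℝ) := hkey
      have : (cfun i).1 < (cfun i').1 + 1 + m := by exact_mod_cast this
      omega
    · -- y window
      have hkey : ((cfun i).2 : ℝ) / (n:ℝ)^l ≤ (((cfun i').2 : ℝ) + 1 + 1) / (n:ℝ)^l := by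
        have e1 : ((cfun i).2 : ℝ) / (n:ℝ)^l ≤ (Q i).2 := hy.1
        have e2 : (Q i').2 ≤ (((cfun i').2 : ℝ) + 1) / (n:ℝ)^l := hy'.2
        have e3 : (Q i).2 ≤ (Q i').2 + ((n:ℝ)^l)⁻¹ := by linarith [habs2.2]
        have e4 : (1:ℝ)/(n:ℝ)^l + (((cfun i').2 : ℝ) + 1) / (n:ℝ)^l
            = (((cfun i').2 : ℝ) + 1 + 1) / (n:ℝ)^l := by ring
        have e5 : ((n:ℝ)^l)⁻¹ = 1/(n:ℝ)^l := by rw [inv_eq_one_div]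
        linarith
      rw [div_le_div_iff_of_pos_right hnl] at hkey
      have h9 : (cfun i).2 ≤ (cfun i').2 + 1 + 1 := by exact_mod_cast hkey
      omega
  have hne : (coverSet F ((n:ℝ)^l)⁻¹).Nonempty := ⟨_, cover_mem hF l⟩
  have := card_le_coverNumber_mul hr0 hne S Q cfun m 2 hQF hinj hwin
  rw [hS, Finset.card_product, card_words, card_words] at this
  exact this

lemma klim : Tendsto (fun l : ℕ => (kfun m n l : ℝ) / l) atTop
    (nhds (Real.log n / Real.log m)) := by
  have hm := hF.one_lt_m
  have hn : 1 < n := lt_trans hm hF.m_lt_n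
  have hm1 : (1:ℝ) < m := by exact_mod_cast hm
  have hn1 : (1:ℝ) < n := by exact_mod_cast hn
  have ha : 0 < Real.log m := Real.log_pos hm1
  have hb : 0 < Real.log n := Real.log_pos hn1
  apply tendsto_of_tendsto_of_tendsto_of_le_of_le'
    (g := fun _ : ℕ => Real.log n / Real.log m)
    (h := fun l : ℕ => Real.log n / Real.log m + 1 / l)
  · exact tendsto_const_nhds
  · simpa using tendsto_const_nhds.add (tendsto_one_div_atTop_nhds_zero_nat (𝕜 := ℝ))
  · filter_upwards [eventually_ge_atTop 1] with l hl
    have hk := kfun_spec hm n l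
    have h1 : (l:ℝ) * Real.log n ≤ (kfun m n l : ℝ) * Real.log m := by
      have h2 : ((n:ℝ))^l ≤ ((m:ℝ))^(kfun m n l) := by exact_mod_cast hk
      have := Real.log_le_log (by positivity) h2
      rwa [Real.log_pow, Real.log_pow] at this
    have hl0 : (0:ℝ) < l := by exact_mod_cast hl
    rw [div_le_div_iff₀ ha hl0]
    linarith
  · filter_upwards [eventually_ge_atTop 1] with l hl
    have hl0 : (0:ℝ) < l := by exact_mod_cast hl
    have hkl : l ≤ kfun m n l := le_kfun hm (le_of_lt hF.m_lt_n) l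
    have hk1 : 1 ≤ kfun m n l := le_trans hl hkl
    have hmin := kfun_min hm n l (j := kfun m n l - 1) (by omega)
    have h1 : ((kfun m n l : ℝ) - 1) * Real.log m < (l:ℝ) * Real.log n := by
      have hc : ((m:ℝ))^(kfun m n l - 1) < ((n:ℝ))^l := by exact_mod_cast hmin
      have h3 := Real.log_lt_log (by positivity) hc
      rw [Real.log_pow, Real.log_pow] at h3
      have hcast : ((kfun m n l - 1 : ℕ) : ℝ) = (kfun m n l : ℝ) - 1 := by
        rw [Nat.cast_sub hk1]; simp
      rw [hcast] at h3
      linarith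
    rw [div_add_div _ _ (ne_of_gt ha) (ne_of_gt hl0), div_le_div_iff₀ hl0 (by positivity)]
    nlinarith [mul_le_mul_of_nonneg_right h1.le hl0.le]

lemma ulim : Tendsto
    (fun l : ℕ => Real.log ((D.card ^ l * (cols D).card ^ (kfun m n l - l) : ℕ) : ℝ) / l)
    atTop
    (nhds (Real.log D.card + (Real.log n / Real.log m - 1) * Real.log (cols D).card)) := by
  have hm := hF.one_lt_m
  have hMpos : 0 < (cols D).card := Finset.card_pos.mpr (hF.D_nonempty.image _)
  have hNpos : 0 < D.card := Finset.card_pos.mpr hF.D_nonempty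
  have hMr : (0:ℝ) < (cols D).card := by exact_mod_cast hMpos
  have hNr : (0:ℝ) < D.card := by exact_mod_cast hNpos
  have hmain : Tendsto
      (fun l : ℕ => Real.log D.card + ((kfun m n l : ℝ)/l - 1) * Real.log (cols D).card)
      atTop
      (nhds (Real.log D.card + (Real.log n / Real.log m - 1) * Real.log (cols D).card)) :=
    tendsto_const_nhds.add (((klim hF).sub_const 1).mul_const _)
  apply hmain.congr'
  filter_upwards [eventually_ge_atTop 1] with l hl
  have hl0 : (0:ℝ) < l := by exact_mod_cast hl
  have hkl : l ≤ kfun m n l := le_kfun hm (le_of_lt hF.m_lt_n) l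
  have hcast : ((D.card ^ l * (cols D).card ^ (kfun m n l - l) : ℕ) : ℝ)
      = (D.card : ℝ) ^ l * ((cols D).card : ℝ) ^ (kfun m n l - l) := by push_cast; ring
  rw [hcast, Real.log_mul (by positivity) (by positivity), Real.log_pow, Real.log_pow]
  have hcast2 : ((kfun m n l - l : ℕ) : ℝ) = (kfun m n l : ℝ) - l := by
    rw [Nat.cast_sub hkl]
  field_simp
  rw [hcast2]; ring

lemma philim :
    Tendsto (fun l : ℕ =>
        (Real.log ((D.card ^ l * (cols D).card ^ (kfun m n l - l) : ℕ) : ℝ)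
          - Real.log (((2*m+1)*(2*2+1) : ℕ) : ℝ)) / (((l:ℝ) + 1) * Real.log n))
      atTop
      (nhds ((Real.log D.card + (Real.log n / Real.log m - 1) * Real.log (cols D).card)
        / Real.log n)) := by
  have hn : 1 < n := lt_trans hF.one_lt_m hF.m_lt_n
  have hn1 : (1:ℝ) < n := by exact_mod_cast hn
  have hb : 0 < Real.log n := Real.log_pos hn1
  set s := Real.log D.card + (Real.log n / Real.log m - 1) * Real.log (cols D).card with hs
  set LC := Real.log (((2*m+1)*(2*2+1) : ℕ) : ℝ) with hLC
  have hA : Tendsto (fun l : ℕ =>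
      (Real.log ((D.card ^ l * (cols D).card ^ (kfun m n l - l) : ℕ) : ℝ) / l
        - LC * ((l:ℝ))⁻¹) * (1 - 1/((l:ℝ)+1)) / Real.log n) atTop
      (nhds ((s - LC * 0) * (1 - 0) / Real.log n)) := by
    apply Tendsto.div_const
    apply Tendsto.mul
    · exact (ulim hF).sub (tendsto_const_nhds.mul tendsto_inv_atTop_nhds_zero_nat)
    · exact tendsto_const_nhds.sub tendsto_one_div_add_atTop_nhds_zero_nat
  simp only [mul_zero, sub_zero, mul_one] at hA
  apply hA.congr'
  filter_upwards [eventually_ge_atTop 1] with l hl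
  have hl0 : (0:ℝ) < l := by exact_mod_cast hl
  field_simp
  ring

lemma psilim :
    Tendsto (fun l : ℕ =>
        Real.log ((D.card ^ (l+1) * (cols D).card ^ (kfun m n (l+1) - (l+1)) : ℕ) : ℝ)
          / ((l:ℝ) * Real.log n))
      atTop
      (nhds ((Real.log D.card + (Real.log n / Real.log m - 1) * Real.log (cols D).card)
        / Real.log n)) := by
  have hn : 1 < n := lt_trans hF.one_lt_m hF.m_lt_n
  have hn1 : (1:ℝ) < n := by exact_mod_cast hn
  have hb : 0 < Real.log n := Real.log_pos hn1
  set s := Real.log D.card + (Real.log n / Real.log m - 1) * Real.log (cols D).card with hs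
  have hcomp : Tendsto (fun l : ℕ =>
      Real.log ((D.card ^ (l+1) * (cols D).card ^ (kfun m n (l+1) - (l+1)) : ℕ) : ℝ)
        / ((l:ℝ) + 1)) atTop (nhds s) := by
    have := (ulim hF).comp (tendsto_add_atTop_nat 1)
    apply this.congr
    intro l
    simp [Function.comp]
  have hA : Tendsto (fun l : ℕ =>
      (Real.log ((D.card ^ (l+1) * (cols D).card ^ (kfun m n (l+1) - (l+1)) : ℕ) : ℝ)
        / ((l:ℝ) + 1)) * (1 + 1/(l:ℝ)) / Real.log n) atTop
      (nhds (s * (1 + 0) / Real.log n)) := by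
    apply Tendsto.div_const
    apply hcomp.mul
    exact tendsto_const_nhds.add (by simpa using tendsto_inv_atTop_nhds_zero_nat)
  simp only [add_zero, mul_one] at hA
  apply hA.congr'
  filter_upwards [eventually_ge_atTop 1] with l hl
  have hl0 : (0:ℝ) < l := by exact_mod_cast hl
  field_simp

end Carpet

end BM
open BM

theorem bm_box_dimension (m n : ℕ) (D : Finset (ℕ × ℕ)) (F : Set (ℝ × ℝ))
    (hF : IsBMCarpet m n D F) :
    Tendsto (fun r : ℝ => Real.log (coverNumber F r) / (-Real.log r))
      (nhdsWithin 0 (Set.Ioi 0))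
      (nhds (Real.log ((cols D).card : ℝ) / Real.log m +
        Real.log ((D.card : ℝ) / ((cols D).card : ℝ)) / Real.log n)) := by
  have hm := hF.one_lt_m
  have hn : 1 < n := lt_trans hm hF.m_lt_n
  have hm1 : (1:ℝ) < m := by exact_mod_cast hm
  have hn1 : (1:ℝ) < n := by exact_mod_cast hn
  have ha : 0 < Real.log m := Real.log_pos hm1
  have hb : 0 < Real.log n := Real.log_pos hn1
  have hMpos : 0 < (cols D).card := Finset.card_pos.mpr (hF.D_nonempty.image _)
  have hNpos : 0 < D.card := Finset.card_pos.mpr hF.D_nonempty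
  have hMr : (0:ℝ) < (cols D).card := by exact_mod_cast hMpos
  have hNr : (0:ℝ) < D.card := by exact_mod_cast hNpos
  have htarget : Real.log ((cols D).card : ℝ) / Real.log m +
      Real.log ((D.card : ℝ) / ((cols D).card : ℝ)) / Real.log n
      = (Real.log D.card + (Real.log n / Real.log m - 1) * Real.log (cols D).card)
        / Real.log n := by
    rw [Real.log_div (ne_of_gt hNr) (ne_of_gt hMr)]
    field_simp
    ring
  rw [htarget]
  set L : ℝ → ℕ := fun r => ⌊Real.logb n r⁻¹⌋₊ with hLdef
  have hLtop : Tendsto L (nhdsWithin 0 (Set.Ioi 0)) atTop := by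
    apply tendsto_nat_floor_atTop.comp
    exact (Real.tendsto_logb_atTop hn1).comp tendsto_inv_nhdsGT_zero
  have hphi := (philim hF).comp hLtop
  have hpsi := (psilim hF).comp hLtop
  have key : ∀ r : ℝ, r ∈ Set.Ioo (0:ℝ) (n:ℝ)⁻¹ →
      ((Real.log ((D.card ^ (L r) * (cols D).card ^ (kfun m n (L r) - (L r)) : ℕ) : ℝ)
          - Real.log (((2*m+1)*(2*2+1) : ℕ) : ℝ)) / (((L r : ℝ) + 1) * Real.log n)
        ≤ Real.log (coverNumber F r) / (-Real.log r)) ∧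
      (Real.log (coverNumber F r) / (-Real.log r)
        ≤ Real.log ((D.card ^ (L r + 1) * (cols D).card ^ (kfun m n (L r + 1) - (L r + 1)) : ℕ) : ℝ)
          / ((L r : ℝ) * Real.log n)) := by
    rintro r ⟨hr0, hrn⟩
    set l := L r with hldef
    have hrinv0 : (0:ℝ) < r⁻¹ := by positivity
    have hnr : (n:ℝ) < r⁻¹ := by
      rw [← one_div, lt_div_iff₀ hr0]
      calc (n:ℝ) * r < (n:ℝ) * (n:ℝ)⁻¹ :=
            mul_lt_mul_of_pos_left hrn (by positivity)
        _ = 1 := mul_inv_cancel₀ (by positivity)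
    have hx0 : 0 ≤ Real.logb n r⁻¹ :=
      Real.logb_nonneg hn1 (by linarith)
    have hx1 : 1 ≤ Real.logb n r⁻¹ := by
      have h8 := Real.logb_le_logb_of_le hn1 (by positivity : (0:ℝ) < (n:ℝ)) (le_of_lt hnr)
      rwa [Real.logb_self_eq_one hn1] at h8
    have hl1 : 1 ≤ l := by
      rw [hldef]
      exact Nat.le_floor (by simpa using hx1)
    have hl0 : (0:ℝ) < l := by exact_mod_cast hl1
    have hfl : ((l:ℕ):ℝ) ≤ Real.logb n r⁻¹ := Nat.floor_le hx0
    have hfl2 : Real.logb n r⁻¹ < (l:ℝ) + 1 := Nat.lt_floor_add_one _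
    have hrpow : (n:ℝ) ^ (Real.logb n r⁻¹) = r⁻¹ :=
      Real.rpow_logb (by positivity) (ne_of_gt hn1) hrinv0
    have hp1 : (n:ℝ)^l ≤ r⁻¹ := by
      rw [← hrpow, ← Real.rpow_natCast (n:ℝ) l]
      exact (Real.rpow_le_rpow_left_iff hn1).mpr hfl
    have hp2 : r⁻¹ < (n:ℝ)^(l+1) := by
      rw [← hrpow, ← Real.rpow_natCast (n:ℝ) (l+1)]
      apply (Real.rpow_lt_rpow_left_iff hn1).mpr
      push_cast
      exact hfl2
    have hr_le : r ≤ ((n:ℝ)^l)⁻¹ := by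
      rw [← inv_inv r]
      exact inv_anti₀ (by positivity) hp1
    have hr_ge : ((n:ℝ)^(l+1))⁻¹ ≤ r := by
      rw [← inv_inv r]
      exact (inv_strictAnti₀ hrinv0 hp2).le
    have hne2 : (coverSet F ((n:ℝ)^(l+1))⁻¹).Nonempty := ⟨_, cover_mem hF (l+1)⟩
    have hner : (coverSet F r).Nonempty := ⟨_, coverSet_mono hr_ge (cover_mem hF (l+1))⟩
    have hup : coverNumber F r ≤ D.card ^ (l+1) * (cols D).card ^ (kfun m n (l+1) - (l+1)) :=
      le_trans (coverNumber_anti hr_ge hne2) (coverNumber_le_P hF (l+1))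
    have hlowN : coverNumber F ((n:ℝ)^l)⁻¹ ≤ coverNumber F r := coverNumber_anti hr_le hner
    have hlow : D.card ^ l * (cols D).card ^ (kfun m n l - l)
        ≤ coverNumber F r * ((2*m+1)*(2*2+1)) :=
      le_trans (P_le_coverNumber hF l) (Nat.mul_le_mul_right _ hlowN)
    have h1le : 1 ≤ coverNumber F r := one_le_coverNumber hF.F_nonempty hner
    have hcr : (1:ℝ) ≤ (coverNumber F r : ℝ) := by exact_mod_cast h1le
    have hlogc : 0 ≤ Real.log (coverNumber F r) := Real.log_nonneg hcr
    have hlogr1 : (l:ℝ) * Real.log n ≤ -Real.log r := by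
      rw [← Real.log_inv]
      have h5 := Real.log_le_log (by positivity) hp1
      rwa [Real.log_pow] at h5
    have hlogr2 : -Real.log r ≤ ((l:ℝ)+1) * Real.log n := by
      rw [← Real.log_inv]
      have h5 := Real.log_le_log hrinv0 hp2.le
      rw [Real.log_pow] at h5
      push_cast at h5
      linarith
    have hpos : 0 < -Real.log r :=
      lt_of_lt_of_le (by positivity) hlogr1
    constructor
    · have hnum : Real.log ((D.card ^ l * (cols D).card ^ (kfun m n l - l) : ℕ) : ℝ)
          - Real.log (((2*m+1)*(2*2+1) : ℕ) : ℝ) ≤ Real.log (coverNumber F r) := by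
        have hcast : ((D.card ^ l * (cols D).card ^ (kfun m n l - l) : ℕ) : ℝ)
            ≤ (coverNumber F r : ℝ) * (((2*m+1)*(2*2+1) : ℕ) : ℝ) := by
          exact_mod_cast hlow
        have hCpos : (0:ℝ) < (((2*m+1)*(2*2+1) : ℕ) : ℝ) := by positivity
        have hPpos : (0:ℝ) < ((D.card ^ l * (cols D).card ^ (kfun m n l - l) : ℕ) : ℝ) := by
          have h7 : 0 < D.card ^ l * (cols D).card ^ (kfun m n l - l) := by positivity
          exact_mod_cast h7
        have h6 := Real.log_le_log hPpos hcast
        rw [Real.log_mul (by linarith) (ne_of_gt hCpos)] at h6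
        linarith
      have hden : (0:ℝ) < ((l:ℝ)+1) * Real.log n := by positivity
      calc (Real.log ((D.card ^ l * (cols D).card ^ (kfun m n l - l) : ℕ) : ℝ)
            - Real.log (((2*m+1)*(2*2+1) : ℕ) : ℝ)) / (((l:ℝ)+1) * Real.log n)
          ≤ Real.log (coverNumber F r) / (((l:ℝ)+1) * Real.log n) :=
            (div_le_div_iff_of_pos_right hden).mpr hnum
        _ ≤ Real.log (coverNumber F r) / (-Real.log r) :=
            div_le_div_of_nonneg_left hlogc hpos hlogr2
    · have h2 : Real.log (coverNumber F r)
          ≤ Real.log ((D.card ^ (l+1) * (cols D).card ^ (kfun m n (l+1) - (l+1)) : ℕ) : ℝ) := by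
        apply Real.log_le_log (by linarith)
        exact_mod_cast hup
      have hden : (0:ℝ) < (l:ℝ) * Real.log n := mul_pos hl0 hb
      calc Real.log (coverNumber F r) / (-Real.log r)
          ≤ Real.log (coverNumber F r) / ((l:ℝ) * Real.log n) :=
            div_le_div_of_nonneg_left hlogc hden hlogr1
        _ ≤ Real.log ((D.card ^ (l+1) * (cols D).card ^ (kfun m n (l+1) - (l+1)) : ℕ) : ℝ)
              / ((l:ℝ) * Real.log n) :=
            (div_le_div_iff_of_pos_right hden).mpr h2
  have hmem : Set.Ioo (0:ℝ) (n:ℝ)⁻¹ ∈ nhdsWithin 0 (Set.Ioi 0) :=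
    Ioo_mem_nhdsGT_of_mem ⟨le_refl _, by positivity⟩
  apply tendsto_of_tendsto_of_tendsto_of_le_of_le' hphi hpsi
  · filter_upwards [hmem] with r hr
    exact (key r hr).1
  · filter_upwards [hmem] with r hr
    exact (key r hr).2


end
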